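/- If β = 1 + δ with 0 < δ and δ → 0, then the unique positive root ζ of tanh(β·x) = x satisfies ζ = √(3δ) + O(δ^{3/2}); more precisely, there exist constants C > 0 and δ₀ > 0 such that for all 0 < δ < δ₀, |ζ(δ) − √(3δ)| ≤ C·δ^{3/2}. -/

import Mathlib

set_option maxHeartbeats 1000000

lemma hasDerivAt_tanh' (x : ℝ) : HasDerivAt Real.tanh (1 - Real.tanh x ^ 2) x := by
  have h := (Real.hasDerivAt_sinh x).div (Real.hasDerivAt_cosh x) (Real.cosh_pos x).ne'
  have hfun : Real.tanh = fun y => Real.sinh y / Real.cosh y :=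
    funext Real.tanh_eq_sinh_div_cosh
  have hx : (Real.cosh x * Real.cosh x - Real.sinh x * Real.sinh x) / Real.cosh x ^ 2
      = 1 - Real.tanh x ^ 2 := by
    rw [Real.tanh_eq_sinh_div_cosh]
    have h1 := Real.cosh_sq_sub_sinh_sq x
    have h2 := (Real.cosh_pos x).ne'
    field_simp
  rw [← hx, hfun]
  exact h

lemma continuous_tanh' : Continuous Real.tanh :=
  continuous_iff_continuousAt.mpr fun y => (hasDerivAt_tanh' y).differentiableAt.continuousAt

lemma tanh_nonneg' {x : ℝ} (hx : 0 ≤ x) : 0 ≤ Real.tanh x := by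
  rw [Real.tanh_eq_sinh_div_cosh]
  exact div_nonneg (by rwa [Real.sinh_nonneg_iff]) (Real.cosh_pos x).le

lemma tanh_lt_one' (x : ℝ) : Real.tanh x < 1 := by
  rw [Real.tanh_eq_sinh_div_cosh, div_lt_one (Real.cosh_pos x)]
  exact Real.sinh_lt_cosh x

lemma tanh_le_self {x : ℝ} (hx : 0 ≤ x) : Real.tanh x ≤ x := by
  have hg : ∀ y : ℝ, HasDerivAt (fun z => z - Real.tanh z) (Real.tanh y ^ 2) y := by
    intro y
    have := (hasDerivAt_id y).sub (hasDerivAt_tanh' y)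
    exact this.congr_deriv (by ring)
  have hm : Monotone (fun z => z - Real.tanh z) :=
    monotone_of_deriv_nonneg (fun y => (hg y).differentiableAt)
      (fun y => by rw [(hg y).deriv]; positivity)
  have := hm hx
  simp only [Real.tanh_zero, sub_zero] at this
  linarith

lemma tanh_ge_cubic {x : ℝ} (hx : 0 ≤ x) : x - x ^ 3 / 3 ≤ Real.tanh x := by
  have hg : ∀ y : ℝ, HasDerivAt (fun z => Real.tanh z - (z - z ^ 3 / 3))
      (y ^ 2 - Real.tanh y ^ 2) y := by
    intro y
    have := (hasDerivAt_tanh' y).sub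
      ((hasDerivAt_id y).sub ((hasDerivAt_pow 3 y).div_const 3))
    exact this.congr_deriv (by push_cast; ring)
  have hm : MonotoneOn (fun z : ℝ => Real.tanh z - (z - z ^ 3 / 3)) (Set.Ici 0) := by
    apply monotoneOn_of_deriv_nonneg (convex_Ici 0)
    · exact (continuous_tanh'.sub (continuous_id.sub ((continuous_pow 3).div_const 3))).continuousOn
    · exact fun y _ => (hg y).differentiableAt.differentiableWithinAt
    · intro y hy
      rw [interior_Ici] at hy
      rw [(hg y).deriv]
      have h1 : 0 ≤ Real.tanh y := tanh_nonneg' (le_of_lt hy)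
      have h2 : Real.tanh y ≤ y := tanh_le_self (le_of_lt hy)
      nlinarith
  have := hm (Set.self_mem_Ici) (Set.mem_Ici.mpr hx) hx
  simp only [Real.tanh_zero] at this
  norm_num at this
  linarith

lemma tanh_le_quintic {x : ℝ} (hx : 0 ≤ x) (hx2 : x ≤ 3 / 2) :
    Real.tanh x ≤ x - x ^ 3 / 3 + 2 * x ^ 5 / 15 := by
  have hg : ∀ y : ℝ, HasDerivAt (fun z => (z - z ^ 3 / 3 + 2 * z ^ 5 / 15) - Real.tanh z)
      (Real.tanh y ^ 2 - y ^ 2 + 2 * y ^ 4 / 3) y := by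
    intro y
    have := (((hasDerivAt_id y).sub ((hasDerivAt_pow 3 y).div_const 3)).add
      (((hasDerivAt_pow 5 y).const_mul 2).div_const 15)).sub (hasDerivAt_tanh' y)
    exact this.congr_deriv (by push_cast; ring)
  have hm : MonotoneOn (fun z : ℝ => (z - z ^ 3 / 3 + 2 * z ^ 5 / 15) - Real.tanh z)
      (Set.Icc 0 (3 / 2)) := by
    apply monotoneOn_of_deriv_nonneg (convex_Icc 0 (3 / 2))
    · exact ((continuous_id.sub ((continuous_pow 3).div_const 3)).add ((continuous_const.mul (continuous_pow 5)).div_const 15)).sub continuous_tanh' |>.continuousOn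
    · exact fun y _ => (hg y).differentiableAt.differentiableWithinAt
    · intro y hy
      rw [interior_Icc] at hy
      obtain ⟨hy0, hy1⟩ := hy
      rw [(hg y).deriv]
      have h1 : y - y ^ 3 / 3 ≤ Real.tanh y := tanh_ge_cubic hy0.le
      have hy2 : y ^ 2 ≤ 9 / 4 := by nlinarith
      have h2 : 0 ≤ y - y ^ 3 / 3 := by nlinarith [mul_le_mul_of_nonneg_left hy2 hy0.le]
      have h3 := mul_le_mul h1 h1 h2 (tanh_nonneg' hy0.le)
      nlinarith [sq_nonneg (y ^ 3), h3]
  have := hm (Set.mem_Icc.mpr ⟨le_refl 0, by norm_num⟩) (Set.mem_Icc.mpr ⟨hx, hx2⟩) hx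
  simp only [Real.tanh_zero] at this
  norm_num at this
  linarith

/-- If β = 1 + δ with δ > 0 small, the unique positive root ζ(δ) of
    tanh((1+δ)·x) = x satisfies |ζ(δ) − √(3δ)| ≤ C·δ^{3/2} for some constants
    C > 0 and δ₀ > 0 and all 0 < δ < δ₀. -/
theorem stmt2 :
    ∃ C : ℝ, 0 < C ∧ ∃ δ₀ : ℝ, 0 < δ₀ ∧
      ∀ δ : ℝ, 0 < δ → δ < δ₀ →
        ∀ ζ : ℝ, 0 < ζ → Real.tanh ((1 + δ) * ζ) = ζ →
          |ζ - Real.sqrt (3 * δ)| ≤ C * δ ^ ((3 : ℝ) / 2) := by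
  refine ⟨15, by norm_num, 1 / 100, by norm_num, ?_⟩
  intro δ hδ hδ' ζ hζ hroot
  have hδ1 : (0:ℝ) < 1 + δ := by linarith
  set u : ℝ := (1 + δ) * ζ with hu_def
  have hu0 : 0 < u := mul_pos hδ1 hζ
  have htu : Real.tanh u = ζ := hroot
  have hζ1 : ζ < 1 := htu ▸ tanh_lt_one' u
  have hu_lt : u < 101 / 100 := by
    calc u = (1 + δ) * ζ := rfl
    _ < (1 + δ) * 1 := mul_lt_mul_of_pos_left hζ1 hδ1
    _ < 101 / 100 := by linarith
  have h2 : u - u ^ 3 / 3 ≤ ζ := htu ▸ tanh_ge_cubic hu0.le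
  have hlow : 3 * δ ≤ (1 + δ) * u ^ 2 := by
    have h' : (1 + δ) * (u - u ^ 3 / 3) ≤ u := by
      have := mul_le_mul_of_nonneg_left h2 hδ1.le
      rw [← hu_def] at this
      linarith
    -- δ * u ≤ (1+δ) u³/3, divide by u
    nlinarith [hu0, mul_pos hu0 hu0]
  have h3 : ζ ≤ u - u ^ 3 / 3 + 2 * u ^ 5 / 15 :=
    htu ▸ tanh_le_quintic hu0.le (by linarith)
  have hupp : (1 + δ) * u ^ 2 / 3 ≤ δ + (1 + δ) * 2 * u ^ 4 / 15 := by
    have h' : u ≤ (1 + δ) * (u - u ^ 3 / 3 + 2 * u ^ 5 / 15) := by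
      have := mul_le_mul_of_nonneg_left h3 hδ1.le
      rw [← hu_def] at this
      linarith
    nlinarith [hu0, mul_pos hu0 hu0]
  -- bootstrap
  have hu4 : u ^ 4 ≤ (101 / 100) ^ 2 * u ^ 2 := by nlinarith [sq_nonneg u]
  have hstep : (1 + δ) * 2 * u ^ 4 / 15 ≤ (101/100) * 2 * ((101/100) ^ 2 * u ^ 2) / 15 := by
    gcongr <;> nlinarith [sq_nonneg u]
  have hA : u ^ 2 ≤ 6 * δ := by
    nlinarith [hupp, hstep, mul_nonneg hδ.le (sq_nonneg u)]
  have hu4' : u ^ 4 ≤ 6 * δ * u ^ 2 := by nlinarith [mul_le_mul_of_nonneg_left hA (sq_nonneg u)]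
  have hstep2 : (1 + δ) * 2 * u ^ 4 / 15 ≤ (101/100) * 2 * (6 * δ * u ^ 2) / 15 := by
    gcongr <;> nlinarith [mul_nonneg hδ.le (sq_nonneg u)]
  have hdu2 : δ * u ^ 2 ≤ 6 * δ ^ 2 := by nlinarith [mul_le_mul_of_nonneg_left hA hδ.le]
  have hB : u ^ 2 ≤ 3 * δ + 15 * δ ^ 2 := by
    nlinarith [hupp, hstep2, mul_nonneg hδ.le (sq_nonneg u), hdu2]
  have hC : 3 * δ - 3 * δ ^ 2 ≤ u ^ 2 := by
    nlinarith [hlow, mul_nonneg hδ.le (sq_nonneg u), sq_nonneg δ,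
      mul_nonneg (mul_nonneg hδ.le hδ.le) hδ.le]
  have hu2 : u ^ 2 = (1 + δ) ^ 2 * ζ ^ 2 := by rw [hu_def]; ring
  rw [hu2] at hB hC
  have hz_up : ζ ^ 2 ≤ 3 * δ + 15 * δ ^ 2 := by
    nlinarith [mul_nonneg hδ.le (sq_nonneg ζ), mul_nonneg (mul_nonneg hδ.le hδ.le) (sq_nonneg ζ)]
  have hz_low : 3 * δ - 15 * δ ^ 2 ≤ ζ ^ 2 := by
    nlinarith [sq_nonneg ζ, sq_nonneg δ, mul_nonneg (mul_nonneg hδ.le hδ.le) hδ.le,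
      mul_nonneg hδ.le (sq_nonneg ζ), mul_nonneg (mul_nonneg hδ.le hδ.le) (sq_nonneg ζ)]
  -- conclude
  have hs0 : 0 < Real.sqrt (3 * δ) := Real.sqrt_pos.mpr (by linarith)
  have hs2 : Real.sqrt (3 * δ) ^ 2 = 3 * δ := Real.sq_sqrt (by linarith)
  have hsd : Real.sqrt δ ≤ Real.sqrt (3 * δ) := Real.sqrt_le_sqrt (by linarith)
  have hsd0 : 0 < Real.sqrt δ := Real.sqrt_pos.mpr hδ
  have hdiff : |ζ - Real.sqrt (3 * δ)| * (ζ + Real.sqrt (3 * δ)) ≤ 15 * δ ^ 2 := by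
    have habs : |ζ - Real.sqrt (3 * δ)| * (ζ + Real.sqrt (3 * δ))
        = |ζ ^ 2 - Real.sqrt (3 * δ) ^ 2| := by
      rw [← abs_of_pos (show 0 < ζ + Real.sqrt (3 * δ) by linarith), ← abs_mul]
      congr 1; ring
    rw [habs, hs2, abs_le]
    constructor <;> linarith
  have hkey : |ζ - Real.sqrt (3 * δ)| * Real.sqrt δ ≤ 15 * δ ^ 2 := by
    calc |ζ - Real.sqrt (3 * δ)| * Real.sqrt δ
        ≤ |ζ - Real.sqrt (3 * δ)| * (ζ + Real.sqrt (3 * δ)) := by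
          apply mul_le_mul_of_nonneg_left _ (abs_nonneg _)
          linarith
    _ ≤ 15 * δ ^ 2 := hdiff
  have hpow : δ ^ ((3:ℝ)/2) * Real.sqrt δ = δ ^ 2 := by
    rw [Real.sqrt_eq_rpow, ← Real.rpow_add hδ,
      show (3:ℝ)/2 + 1/2 = ((2:ℕ):ℝ) by norm_num, Real.rpow_natCast]
  have : 15 * δ ^ 2 = 15 * δ ^ ((3:ℝ)/2) * Real.sqrt δ := by rw [mul_assoc, hpow]
  rw [this] at hkey
  exact le_of_mul_le_mul_right hkey hsd0
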